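/- In the setting of Bayesian persuasion with a matroid constraint and linear receiver utilities, the set 𝓘* of independent sets that are a maximum-weight independent set for the weights i ↦ Σ_θ ξ(θ) r_θ({i}) for some ξ ∈ Δ_Θ has cardinality at most the number of distinct strict orderings of E induced by some ξ in the affine hull of Δ_Θ, which is at most the number of cells of the arrangement of the O(n²) hyperplanes h_{ij} = { ξ : Σ_θ ξ(θ)(r_θ({i}) − r_θ({j})) = 0 } in the (|Θ|−1)-dimensional affine hull; hence |𝓘*| = O(n^{2(|Θ|−1)}) under the non-degeneracy assumption. -/

import Mathlib

open Module

def Bnd : ℕ → ℕ → ℕ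
  | _, 0 => 1
  | 0, _ + 1 => 1
  | k + 1, m + 1 => Bnd (k+1) m + 2 * Bnd k m

lemma Bnd_zero_right (k : ℕ) : Bnd k 0 = 1 := by cases k <;> rfl
lemma Bnd_zero_left (m : ℕ) : Bnd 0 m = 1 := by cases m <;> rfl
lemma Bnd_succ (k m : ℕ) : Bnd (k+1) (m+1) = Bnd (k+1) m + 2 * Bnd k m := rfl

lemma Bnd_mono (k m : ℕ) : Bnd k m ≤ Bnd k (m+1) := by
  cases k with
  | zero => simp [Bnd_zero_left]
  | succ k => rw [Bnd_succ]; omega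

lemma Bnd_le (k m : ℕ) : Bnd k m ≤ (2*m+2)^k := by
  induction m generalizing k with
  | zero => rw [Bnd_zero_right]; exact Nat.one_le_pow _ _ (by norm_num)
  | succ m ih =>
    cases k with
    | zero => rw [Bnd_zero_left]; exact Nat.one_le_pow _ _ (by norm_num)
    | succ k =>
      rw [Bnd_succ]
      have h1 := ih (k+1)
      have h2 := ih k
      calc Bnd (k+1) m + 2 * Bnd k m ≤ (2*m+2)^(k+1) + 2*(2*m+2)^k := by
            have : 2 * Bnd k m ≤ 2 * (2*m+2)^k := by omega
            omega
        _ = (2*m+2)^k * ((2*m+2) + 2) := by ring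
        _ ≤ (2*(m+1)+2)^k * (2*(m+1)+2) := by
            refine Nat.mul_le_mul ?_ (by omega)
            exact Nat.pow_le_pow_left (by omega) _
        _ = (2*(m+1)+2)^(k+1) := by ring

lemma convex_comb_pos {a b t : ℝ} (ha : 0 < a) (hb : 0 < b) (ht0 : 0 ≤ t) (ht1 : t ≤ 1) :
    0 < (1 - t) * a + t * b := by
  rcases le_total a b with h | h
  · have : t * a ≤ t * b := mul_le_mul_of_nonneg_left h ht0
    nlinarith
  · have : (1-t) * b ≤ (1-t) * a := mul_le_mul_of_nonneg_left h (by linarith)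
    nlinarith

lemma signPattern_ncard_le :
    ∀ (m k : ℕ) (V : Type) [AddCommGroup V] [Module ℝ V] [FiniteDimensional ℝ V],
      finrank ℝ V ≤ k → ∀ (f : Fin m → (V →ᵃ[ℝ] ℝ)) (C : Set V), Convex ℝ C →
      {σ : Fin m → SignType | ∃ x ∈ C, ∀ j, σ j = SignType.sign (f j x)}.ncard ≤ Bnd k m := by
  intro m
  induction m with
  | zero =>
    intro k V _ _ _ _ f C _
    rw [Bnd_zero_right]
    refine le_trans (Set.ncard_le_ncard (Set.subset_univ _) Set.finite_univ) ?_
    rw [Set.ncard_univ, Nat.card_unique]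
  | succ m ih =>
    intro k V _ _ _ hk f C hC
    set R := {σ : Fin (m+1) → SignType | ∃ x ∈ C, ∀ j, σ j = SignType.sign (f j x)} with hRdef
    set f' : Fin m → (V →ᵃ[ℝ] ℝ) := fun j => f j.castSucc with hf'
    set R' := {σ : Fin m → SignType | ∃ x ∈ C, ∀ j, σ j = SignType.sign (f' j x)} with hR'def
    have hR'card : R'.ncard ≤ Bnd k m := ih k V hk f' C hC
    set q : (Fin (m+1) → SignType) → (Fin m → SignType) := fun σ => σ ∘ Fin.castSucc with hq
    have hqR : ∀ σ ∈ R, q σ ∈ R' := by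
      rintro σ ⟨x, hxC, hx⟩
      exact ⟨x, hxC, fun j => hx j.castSucc⟩
    have hinj : ∀ s : SignType, Set.InjOn q {σ | σ ∈ R ∧ σ (Fin.last m) = s} := by
      intro s σ₁ h₁ σ₂ h₂ hq12
      funext j
      refine Fin.lastCases ?_ ?_ j
      · rw [h₁.2, h₂.2]
      · intro i; exact congrFun hq12 i
    cases k with
    | zero =>
      -- V is a subsingleton
      have hsub : Subsingleton V := by
        rw [← finrank_zero_iff (R := ℝ)]
        omega
      rw [Bnd_zero_left]
      rcases Set.eq_empty_or_nonempty R with h | ⟨σ0, hσ0⟩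
      · rw [h]; simp
      · have : R ⊆ {σ0} := by
          rintro σ ⟨x, hxC, hx⟩
          obtain ⟨x0, hx0C, hx0⟩ := hσ0
          have : x = x0 := Subsingleton.elim x x0
          subst this
          refine Set.mem_singleton_iff.2 (funext fun j => ?_)
          rw [hx j, hx0 j]
        exact le_trans (Set.ncard_le_ncard this (Set.finite_singleton _)) (by simp)
    | succ k =>
      by_cases hlin : (f (Fin.last m)).linear = 0
      · -- degenerate: last functional is constant
        have hconst : ∀ x y : V, f (Fin.last m) x = f (Fin.last m) y := by
          intro x y
          have h := (f (Fin.last m)).map_vadd y (x - y)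
          rw [vadd_eq_add, sub_add_cancel, hlin] at h
          simpa using h
        have hinjR : Set.InjOn q R := by
          intro σ₁ h₁ σ₂ h₂ hq12
          obtain ⟨x₁, _, hx₁⟩ := h₁
          obtain ⟨x₂, _, hx₂⟩ := h₂
          funext j
          refine Fin.lastCases ?_ ?_ j
          · rw [hx₁ _, hx₂ _, hconst x₁ x₂]
          · intro i; exact congrFun hq12 i
        calc R.ncard = (q '' R).ncard := (Set.ncard_image_of_injOn hinjR).symm
          _ ≤ R'.ncard := Set.ncard_le_ncard (Set.image_subset_iff.2 hqR) (Set.toFinite _)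
          _ ≤ Bnd (k+1) m := hR'card
          _ ≤ Bnd (k+1) (m+1) := Bnd_mono _ _
      · -- main case
        set R0 := {σ | σ ∈ R ∧ σ (Fin.last m) = 0} with hR0def
        set Rp := {σ | σ ∈ R ∧ σ (Fin.last m) = 1} with hRpdef
        set Rm := {σ | σ ∈ R ∧ σ (Fin.last m) = -1} with hRmdef
        have hsplit : R ⊆ R0 ∪ Rp ∪ Rm := by
          intro σ hσ
          rcases hs : σ (Fin.last m) with _ | _ | _
          · exact Or.inl <| Or.inl ⟨hσ, by rw [hs]; rfl⟩
          · exact Or.inr ⟨hσ, by rw [hs]; rfl⟩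
          · exact Or.inl <| Or.inr ⟨hσ, by rw [hs]; rfl⟩
        -- bound on R0 via restriction to the kernel hyperplane
        have hR0card : R0.ncard ≤ Bnd k m := by
          rcases Set.eq_empty_or_nonempty R0 with h | ⟨σ0, hσ0⟩
          · rw [h]; simp
          · obtain ⟨⟨x0, hx0C, hx0⟩, hσ0l⟩ := hσ0
            have hx00 : f (Fin.last m) x0 = 0 := by
              have := (hx0 (Fin.last m)).symm.trans hσ0l
              exact sign_eq_zero_iff.mp this
            set W := LinearMap.ker (f (Fin.last m)).linear with hWdef
            have hWrank : finrank ℝ W ≤ k := by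
              have h1 := LinearMap.finrank_range_add_finrank_ker (f (Fin.last m)).linear
              have h2 : finrank ℝ (LinearMap.range (f (Fin.last m)).linear) = 1 := by
                have hle : finrank ℝ (LinearMap.range (f (Fin.last m)).linear) ≤ 1 := by
                  have := Submodule.finrank_le (LinearMap.range (f (Fin.last m)).linear)
                  simpa using this
                have hne : LinearMap.range (f (Fin.last m)).linear ≠ ⊥ := by
                  simp only [ne_eq, LinearMap.range_eq_bot]; exact hlin
                have h0 : finrank ℝ (LinearMap.range (f (Fin.last m)).linear) ≠ 0 := by
                  simp only [ne_eq, Submodule.finrank_eq_zero]; exact hne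
                omega
              rw [hWdef]; omega
            set incl : W →ᵃ[ℝ] V :=
              ⟨fun v => x0 + (v : V), W.subtype, by
                intro p v
                simp only [vadd_eq_add, Submodule.coe_subtype, Submodule.coe_add]
                abel⟩ with hincl
            set g : Fin m → (W →ᵃ[ℝ] ℝ) := fun j => (f j.castSucc).comp incl with hg
            set C' : Set W := incl ⁻¹' C with hC'def
            have hC' : Convex ℝ C' := hC.affine_preimage incl
            have hsub : q '' R0 ⊆ {σ : Fin m → SignType | ∃ x ∈ C', ∀ j, σ j = SignType.sign (g j x)} := by
              rintro _ ⟨σ, ⟨⟨x, hxC, hx⟩, hσl⟩, rfl⟩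
              have hflx : f (Fin.last m) x = 0 :=
                sign_eq_zero_iff.mp ((hx (Fin.last m)).symm.trans hσl)
              have hxker : x - x0 ∈ W := by
                have h := (f (Fin.last m)).map_vadd x0 (x - x0)
                rw [vadd_eq_add, sub_add_cancel, hflx, hx00, vadd_eq_add, add_zero] at h
                exact LinearMap.mem_ker.2 h.symm
              have hxeq : x0 + (x - x0) = x := by abel
              refine ⟨⟨x - x0, hxker⟩, ?_, fun j => ?_⟩
              · show incl _ ∈ C
                show x0 + (x - x0) ∈ C
                rw [hxeq]; exact hxC
              · show σ j.castSucc = SignType.sign ((f j.castSucc) (incl ⟨x - x0, hxker⟩))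
                show σ j.castSucc = SignType.sign ((f j.castSucc) (x0 + (x - x0)))
                rw [hxeq]
                exact hx j.castSucc
            calc R0.ncard = (q '' R0).ncard := (Set.ncard_image_of_injOn (hinj 0)).symm
              _ ≤ _ := Set.ncard_le_ncard hsub (Set.toFinite _)
              _ ≤ Bnd k m := ih k W hWrank g C' hC'
        -- intersection of + and - prefixes lies in 0 prefixes
        have hint : (q '' Rp) ∩ (q '' Rm) ⊆ q '' R0 := by
          rintro σ' ⟨⟨σp, ⟨⟨x, hxC, hx⟩, hσpl⟩, hqp⟩, ⟨σm, ⟨⟨y, hyC, hy⟩, hσml⟩, hqm⟩⟩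
          have hfx : 0 < f (Fin.last m) x :=
            sign_eq_one_iff.mp ((hx (Fin.last m)).symm.trans hσpl)
          have hfy : f (Fin.last m) y < 0 :=
            sign_eq_neg_one_iff.mp ((hy (Fin.last m)).symm.trans hσml)
          set t : ℝ := f (Fin.last m) x / (f (Fin.last m) x - f (Fin.last m) y) with ht
          have hden : 0 < f (Fin.last m) x - f (Fin.last m) y := by linarith
          have ht0 : 0 ≤ t := div_nonneg hfx.le hden.le
          have ht1 : t ≤ 1 := by rw [div_le_one hden]; linarith
          set z := AffineMap.lineMap x y t with hz
          have hzC : z ∈ C := by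
            rw [hz, AffineMap.lineMap_apply_module]
            exact hC hxC hyC (by linarith) ht0 (by ring)
          have happ : ∀ jj : Fin (m+1), f jj z =
              (1 - t) * f jj x + t * f jj y := by
            intro jj
            rw [hz, AffineMap.apply_lineMap, AffineMap.lineMap_apply_module]
            simp [smul_eq_mul]
          have hflz : f (Fin.last m) z = 0 := by
            rw [happ, ht]
            field_simp
            ring
          refine ⟨Fin.lastCases 0 σ', ⟨⟨z, hzC, fun j => ?_⟩, by simp⟩, ?_⟩
          · refine Fin.lastCases ?_ ?_ j
            · simp [hflz]
            · intro i
              simp only [Fin.lastCases_castSucc]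
              have h1 : σ' i = SignType.sign (f i.castSucc x) := by
                rw [← hqp]; exact hx i.castSucc
              have h2 : σ' i = SignType.sign (f i.castSucc y) := by
                rw [← hqm]; exact hy i.castSucc
              rcases hs : σ' i with _ | _ | _
              · -- zero
                have hx0 : f i.castSucc x = 0 := sign_eq_zero_iff.mp (hs ▸ h1).symm
                have hy0 : f i.castSucc y = 0 := sign_eq_zero_iff.mp (hs ▸ h2).symm
                rw [happ, hx0, hy0]
                simp
              · -- neg
                have hx0 : f i.castSucc x < 0 := sign_eq_neg_one_iff.mp (hs ▸ h1).symm
                have hy0 : f i.castSucc y < 0 := sign_eq_neg_one_iff.mp (hs ▸ h2).symm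
                have := convex_comb_pos (neg_pos.2 hx0) (neg_pos.2 hy0) ht0 ht1
                rw [happ]
                symm
                rw [show SignType.neg = -1 from rfl, sign_eq_neg_one_iff]
                nlinarith
              · -- pos
                have hx0 : 0 < f i.castSucc x := sign_eq_one_iff.mp (hs ▸ h1).symm
                have hy0 : 0 < f i.castSucc y := sign_eq_one_iff.mp (hs ▸ h2).symm
                have := convex_comb_pos hx0 hy0 ht0 ht1
                rw [happ]
                symm
                rw [show SignType.pos = 1 from rfl, sign_eq_one_iff]
                linarith
          · funext i
            simp [hq]
        -- put the pieces together
        have hcard1 : R.ncard ≤ R0.ncard + (Rp.ncard + Rm.ncard) := by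
          refine le_trans (Set.ncard_le_ncard hsplit (Set.toFinite _)) ?_
          refine le_trans (Set.ncard_union_le _ _) ?_
          have := Set.ncard_union_le R0 Rp
          omega
        have hpm : Rp.ncard + Rm.ncard ≤ Bnd (k+1) m + R0.ncard := by
          have h1 : Rp.ncard = (q '' Rp).ncard := (Set.ncard_image_of_injOn (hinj 1)).symm
          have h2 : Rm.ncard = (q '' Rm).ncard := (Set.ncard_image_of_injOn (hinj (-1))).symm
          have h3 := Set.ncard_inter_add_ncard_union (q '' Rp) (q '' Rm) (Set.toFinite _) (Set.toFinite _)
          have h4 : (q '' Rp ∪ q '' Rm).ncard ≤ R'.ncard := by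
            refine Set.ncard_le_ncard ?_ (Set.toFinite _)
            rintro σ' (⟨σ, hσ, rfl⟩ | ⟨σ, hσ, rfl⟩)
            · exact hqR σ hσ.1
            · exact hqR σ hσ.1
          have h5 : ((q '' Rp) ∩ (q '' Rm)).ncard ≤ (q '' R0).ncard :=
            Set.ncard_le_ncard hint (Set.toFinite _)
          have h6 : (q '' R0).ncard = R0.ncard := Set.ncard_image_of_injOn (hinj 0)
          omega
        rw [Bnd_succ]
        omega

structure GreedyMatroid (α : Type*) [DecidableEq α] where
  Indep : Finset α → Prop
  empty_indep : Indep ∅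
  subset_indep : ∀ ⦃S T : Finset α⦄, S ⊆ T → Indep T → Indep S
  exchange : ∀ ⦃S T : Finset α⦄, Indep S → Indep T → S.card < T.card →
    ∃ i ∈ T, i ∉ S ∧ Indep (insert i S)

namespace GreedyMatroid

variable {α : Type*} [DecidableEq α] (M : GreedyMatroid α)

open scoped Classical in
noncomputable def rk (U : Finset α) : ℕ :=
  U.powerset.sup (fun A => if M.Indep A then A.card else 0)

lemma le_rk {A U : Finset α} (hA : M.Indep A) (hAU : A ⊆ U) : A.card ≤ M.rk U := by
  classical
  have := Finset.le_sup (f := fun A => if M.Indep A then A.card else 0)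
    (Finset.mem_powerset.2 hAU)
  simp only [if_pos hA] at this
  exact this

lemma exists_rk (U : Finset α) : ∃ A, A ⊆ U ∧ M.Indep A ∧ A.card = M.rk U := by
  classical
  obtain ⟨A, hmem, he⟩ := Finset.exists_mem_eq_sup U.powerset ⟨∅, by simp⟩
    (fun A => if M.Indep A then A.card else 0)
  by_cases hA : M.Indep A
  · exact ⟨A, Finset.mem_powerset.1 hmem, hA, by rw [if_pos hA] at he; exact he.symm ▸ rfl⟩
  · refine ⟨∅, Finset.empty_subset _, M.empty_indep, ?_⟩
    simp only [if_neg hA] at he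
    rw [Finset.card_empty]
    exact he.symm

lemma augment {A U : Finset α} (hA : M.Indep A) (hAU : A ⊆ U) (hlt : A.card < M.rk U) :
    ∃ x ∈ U, x ∉ A ∧ M.Indep (insert x A) := by
  obtain ⟨B, hBU, hB, hBcard⟩ := M.exists_rk U
  obtain ⟨x, hxB, hxA, hins⟩ := M.exchange hA hB (by omega)
  exact ⟨x, hBU hxB, hxA, hins⟩

lemma grow : ∀ (k : ℕ) {I T : Finset α}, M.Indep I → M.Indep T → T.card = I.card + k →
    ∃ D, M.Indep D ∧ I ⊆ D ∧ D ⊆ I ∪ T ∧ D.card = T.card := by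
  intro k
  induction k with
  | zero =>
    intro I T hI _ hcard
    exact ⟨I, hI, Finset.Subset.refl I, Finset.subset_union_left, by omega⟩
  | succ k ih =>
    intro I T hI hT hcard
    obtain ⟨i, hiT, hiI, hins⟩ := M.exchange hI hT (by omega)
    obtain ⟨D, hD, hID, hDsub, hDcard⟩ := ih hins hT
      (by rw [Finset.card_insert_of_notMem hiI]; omega)
    refine ⟨D, hD, le_trans (Finset.subset_insert i I) hID, ?_, hDcard⟩
    refine hDsub.trans ?_
    intro a ha
    rcases Finset.mem_union.1 ha with h | h
    · rcases Finset.mem_insert.1 h with rfl | h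
      · exact Finset.mem_union_right _ hiT
      · exact Finset.mem_union_left _ h
    · exact Finset.mem_union_right _ h

/-- Key lemma: a maximum-weight independent set meets every "upward closed, positive
weight" set in a maximum-rank independent subset. -/
lemma max_inter_card {w : α → ℝ} {S : Finset α} (hS : M.Indep S)
    (hmax : ∀ T, M.Indep T → ∑ i ∈ T, w i ≤ ∑ i ∈ S, w i)
    {U : Finset α} (hup : ∀ b ∈ U, ∀ c, w b ≤ w c → c ∈ U)
    (hpos : ∀ b ∈ U, 0 < w b) : (S ∩ U).card = M.rk U := by
  refine le_antisymm (M.le_rk (M.subset_indep Finset.inter_subset_left hS)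
    Finset.inter_subset_right) ?_
  by_contra hcon
  push_neg at hcon
  obtain ⟨x, hxU, hxA, hins⟩ := M.augment
    (M.subset_indep Finset.inter_subset_left hS) Finset.inter_subset_right hcon
  have hxS : x ∉ S := fun hxS => hxA (Finset.mem_inter.2 ⟨hxS, hxU⟩)
  by_cases hSU : S ∩ U = S
  · -- S ⊆ U : just add x
    rw [hSU] at hins
    have := hmax (insert x S) hins
    rw [Finset.sum_insert hxS] at this
    have := hpos x hxU
    linarith
  · -- proper: exchange-grow to a set of the same size, gaining weight
    have hAS : S ∩ U ⊆ S := Finset.inter_subset_left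
    have hAcard : (S ∩ U).card < S.card := by
      refine Finset.card_lt_card ?_
      exact lt_of_le_of_ne hAS hSU
    have hcardins : (insert x (S ∩ U)).card ≤ S.card := by
      rw [Finset.card_insert_of_notMem hxA]; omega
    obtain ⟨kk, hkk⟩ := Nat.exists_eq_add_of_le hcardins
    obtain ⟨D, hD, hID, hDsub, hDcard⟩ := M.grow kk hins hS (by omega)
    -- D \ S = {x}
    have hxD : x ∈ D := hID (Finset.mem_insert_self x _)
    have hDS : D \ S = {x} := by
      apply Finset.Subset.antisymm
      · intro a ha
        rcases Finset.mem_sdiff.1 ha with ⟨haD, haS⟩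
        rcases Finset.mem_union.1 (hDsub haD) with h | h
        · rcases Finset.mem_insert.1 h with h | h
          · exact Finset.mem_singleton.2 h
          · exact absurd (hAS h) haS
        · exact absurd h haS
      · intro a ha
        rw [Finset.mem_singleton] at ha
        subst ha
        exact Finset.mem_sdiff.2 ⟨hxD, hxS⟩
    have hc1 : (D \ S).card = 1 := by rw [hDS]; simp
    have hc2 : (S \ D).card = 1 := by
      have h1 := Finset.card_inter_add_card_sdiff D S
      have h2 := Finset.card_inter_add_card_sdiff S D
      rw [Finset.inter_comm S D] at h2
      omega
    obtain ⟨y, hy⟩ := Finset.card_eq_one.1 hc2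
    have hyS : y ∈ S ∧ y ∉ D := by
      have := Finset.mem_sdiff.1 (hy ▸ Finset.mem_singleton_self y)
      exact this
    have hyU : y ∉ U := by
      intro hyU
      exact hyS.2 (hID (Finset.mem_insert_of_mem (Finset.mem_inter.2 ⟨hyS.1, hyU⟩)))
    have hwy : w y < w x := by
      by_contra hle
      push_neg at hle
      exact hyU (hup x hxU y hle)
    -- weight comparison
    have hsum1 := Finset.sum_inter_add_sum_sdiff D S w
    have hsum2 := Finset.sum_inter_add_sum_sdiff S D w
    rw [Finset.inter_comm S D] at hsum2
    have hDSsum : ∑ i ∈ D \ S, w i = w x := by rw [hDS]; simp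
    have hSDsum : ∑ i ∈ S \ D, w i = w y := by rw [hy]; simp
    have := hmax D hD
    linarith

end GreedyMatroid

/-! ### Auxiliary: linear functionals on `Fin d → ℝ` -/

noncomputable def cfun (d : ℕ) (c : Fin d → ℝ) : (Fin d → ℝ) →ₗ[ℝ] ℝ :=
  ∑ θ, c θ • LinearMap.proj θ

lemma cfun_apply (d : ℕ) (c u : Fin d → ℝ) : cfun d c u = ∑ θ, c θ * u θ := by
  simp [cfun, LinearMap.sum_apply, smul_eq_mul]

lemma finrank_ker_eq (d : ℕ) (φ : (Fin d → ℝ) →ₗ[ℝ] ℝ) (u0 : Fin d → ℝ) (hu : φ u0 = 1) :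
    Module.finrank ℝ (LinearMap.ker φ) = d - 1 := by
  have h1 := LinearMap.finrank_range_add_finrank_ker φ
  have hdim : Module.finrank ℝ (Fin d → ℝ) = d := by
    simp [Module.finrank_pi]
  have hle : Module.finrank ℝ (LinearMap.range φ) ≤ 1 := by
    simpa using Submodule.finrank_le (LinearMap.range φ)
  have hne : LinearMap.range φ ≠ ⊥ := by
    intro h
    rw [LinearMap.range_eq_bot] at h
    rw [h] at hu
    simp at hu
  have h0 : Module.finrank ℝ (LinearMap.range φ) ≠ 0 := by
    simp only [ne_eq, Submodule.finrank_eq_zero]; exact hne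
  omega

/-! ### Sign patterns for a general finite index type -/

lemma signPattern_ncard_le' (k : ℕ) (V : Type) [AddCommGroup V] [Module ℝ V]
    [FiniteDimensional ℝ V] (hk : finrank ℝ V ≤ k) (ι : Type) [Fintype ι]
    (f : ι → (V →ᵃ[ℝ] ℝ)) (C : Set V) (hC : Convex ℝ C) :
    {σ : ι → SignType | ∃ x ∈ C, ∀ j, σ j = SignType.sign (f j x)}.ncard
      ≤ Bnd k (Fintype.card ι) := by
  set e := Fintype.equivFin ι with he
  set Φ : (Fin (Fintype.card ι) → SignType) → (ι → SignType) := fun σ => σ ∘ e with hΦ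
  have hinj : Function.Injective Φ := by
    intro σ σ' h
    funext i
    have := congrFun h (e.symm i)
    simpa [hΦ, Function.comp] using this
  have himg : {σ : ι → SignType | ∃ x ∈ C, ∀ j, σ j = SignType.sign (f j x)}
      = Φ '' {σ' : Fin (Fintype.card ι) → SignType |
          ∃ x ∈ C, ∀ j, σ' j = SignType.sign (f (e.symm j) x)} := by
    ext σ
    constructor
    · rintro ⟨x, hxC, hx⟩
      refine ⟨σ ∘ e.symm, ⟨x, hxC, fun j => hx (e.symm j)⟩, ?_⟩
      funext i
      simp [hΦ]
    · rintro ⟨σ', ⟨x, hxC, hx⟩, rfl⟩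
      refine ⟨x, hxC, fun j => ?_⟩
      have := hx (e j)
      simpa [hΦ] using this
  rw [himg, Set.ncard_image_of_injOn hinj.injOn]
  exact signPattern_ncard_le (Fintype.card ι) k V hk (fun j => f (e.symm j)) C hC

/-! ### The posterior-induced weights and sign patterns -/

abbrev PatIdx (n : ℕ) : Type := (Fin n × Fin n) ⊕ Fin n

noncomputable def wgt (d n : ℕ) (r : Fin d → Fin n → ℝ) (ξ : Fin d → ℝ) (i : Fin n) : ℝ :=
  ∑ θ, ξ θ * r θ i

noncomputable def patt (d n : ℕ) (r : Fin d → Fin n → ℝ) (ξ : Fin d → ℝ) : PatIdx n → SignType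
  | Sum.inl pq => SignType.sign (wgt d n r ξ pq.1 - wgt d n r ξ pq.2)
  | Sum.inr a => SignType.sign (wgt d n r ξ a)

noncomputable def MsetF (d n : ℕ) (σ : PatIdx n → SignType) : Finset (Fin n) :=
  Finset.univ.filter (fun a => σ (Sum.inr a) = 0 ∨ ∃ b, b ≠ a ∧ σ (Sum.inl (a, b)) = 0)

noncomputable def Uge (d n : ℕ) (σ : PatIdx n → SignType) (a : Fin n) : Finset (Fin n) :=
  Finset.univ.filter (fun b => σ (Sum.inl (a, b)) ≠ 1)

noncomputable def Ugt (d n : ℕ) (σ : PatIdx n → SignType) (a : Fin n) : Finset (Fin n) :=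
  Finset.univ.filter (fun b => σ (Sum.inl (a, b)) = -1)


open Module

lemma mem_iff_rk (d n : ℕ) (r : Fin d → Fin n → ℝ) (hr : ∀ θ i, 0 ≤ r θ i)
    (M : GreedyMatroid (Fin n)) {ξ : Fin d → ℝ} (hξ0 : ∀ θ, 0 ≤ ξ θ)
    {S : Finset (Fin n)} (hS : M.Indep S)
    (hmax : ∀ T, M.Indep T → ∑ i ∈ T, wgt d n r ξ i ≤ ∑ i ∈ S, wgt d n r ξ i)
    {a : Fin n} (ha : a ∉ MsetF d n (patt d n r ξ)) :
    (a ∈ S ↔ M.rk (Uge d n (patt d n r ξ) a) = M.rk (Ugt d n (patt d n r ξ) a) + 1) := by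
  classical
  set w := wgt d n r ξ with hw
  have hsp : ∀ x y : Fin n, patt d n r ξ (Sum.inl (x, y)) = SignType.sign (w x - w y) :=
    fun _ _ => rfl
  have hse : ∀ x : Fin n, patt d n r ξ (Sum.inr x) = SignType.sign (w x) := fun _ => rfl
  have hMge : ∀ b, b ∈ Uge d n (patt d n r ξ) a ↔ w a ≤ w b := by
    intro b
    rw [Uge, Finset.mem_filter]
    simp only [Finset.mem_univ, true_and, hsp]
    rw [Ne, sign_eq_one_iff, not_lt, sub_nonpos]
  have hMgt : ∀ b, b ∈ Ugt d n (patt d n r ξ) a ↔ w a < w b := by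
    intro b
    rw [Ugt, Finset.mem_filter]
    simp only [Finset.mem_univ, true_and, hsp]
    rw [sign_eq_neg_one_iff, sub_neg]
  simp only [MsetF, Finset.mem_filter, Finset.mem_univ, true_and, not_or, not_exists,
    not_and] at ha
  have hwa0 : 0 ≤ w a := Finset.sum_nonneg fun θ _ => mul_nonneg (hξ0 θ) (hr θ a)
  have hwa : 0 < w a := by
    rcases hwa0.lt_or_eq with h | h
    · exact h
    · exact absurd (by rw [hse, ← h, sign_zero]) ha.1
  have huntied : ∀ b, w a = w b → b = a := by
    intro b hb
    by_contra hne
    exact ha.2 b hne (by rw [hsp, hb, sub_self, sign_zero])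
  have c1 : (S ∩ Uge d n (patt d n r ξ) a).card = M.rk (Uge d n (patt d n r ξ) a) := by
    refine M.max_inter_card hS hmax ?_ ?_
    · intro b hb c hbc
      rw [hMge] at hb ⊢
      linarith
    · intro b hb
      rw [hMge] at hb
      linarith
  have c2 : (S ∩ Ugt d n (patt d n r ξ) a).card = M.rk (Ugt d n (patt d n r ξ) a) := by
    refine M.max_inter_card hS hmax ?_ ?_
    · intro b hb c hbc
      rw [hMgt] at hb ⊢
      linarith
    · intro b hb
      rw [hMgt] at hb
      linarith
  have hUeq : Uge d n (patt d n r ξ) a = insert a (Ugt d n (patt d n r ξ) a) := by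
    ext b
    rw [Finset.mem_insert, hMge, hMgt]
    constructor
    · intro h
      rcases h.lt_or_eq with h' | h'
      · exact Or.inr h'
      · exact Or.inl (huntied b h')
    · rintro (rfl | h)
      · exact le_refl _
      · exact h.le
  have hain : a ∉ Ugt d n (patt d n r ξ) a := by
    rw [hMgt]
    exact lt_irrefl _
  have hcount : (S ∩ Uge d n (patt d n r ξ) a).card
      = (S ∩ Ugt d n (patt d n r ξ) a).card + (if a ∈ S then 1 else 0) := by
    by_cases haS : a ∈ S
    · rw [if_pos haS]
      have : S ∩ Uge d n (patt d n r ξ) a = insert a (S ∩ Ugt d n (patt d n r ξ) a) := by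
        rw [hUeq]
        ext b
        simp only [Finset.mem_inter, Finset.mem_insert]
        constructor
        · rintro ⟨hbS, (rfl | hbU)⟩
          · exact Or.inl rfl
          · exact Or.inr ⟨hbS, hbU⟩
        · rintro (rfl | ⟨hbS, hbU⟩)
          · exact ⟨haS, Or.inl rfl⟩
          · exact ⟨hbS, Or.inr hbU⟩
      rw [this, Finset.card_insert_of_notMem (fun hmem => hain (Finset.mem_inter.1 hmem).2)]
    · rw [if_neg haS, add_zero]
      congr 1
      rw [hUeq]
      ext b
      simp only [Finset.mem_inter, Finset.mem_insert]
      constructor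
      · rintro ⟨hbS, (rfl | hbU)⟩
        · exact absurd hbS haS
        · exact ⟨hbS, hbU⟩
      · rintro ⟨hbS, hbU⟩
        exact ⟨hbS, Or.inr hbU⟩
  constructor
  · intro haS
    rw [if_pos haS] at hcount
    omega
  · intro hrk
    by_contra haS
    rw [if_neg haS] at hcount
    omega


/-- Non-degeneracy implies that the set of "tied or zero-weight" elements is small. -/
lemma Mset_card_le (d n : ℕ) (hd : 1 ≤ d) (hn : 2 ≤ n) (r : Fin d → Fin n → ℝ)
    (hnondeg : ∀ (π : Equiv.Perm (Fin n)) (S : Finset (Fin (n - 1))), S.card = d →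
        LinearIndependent ℝ (fun i : S =>
          (fun θ => r θ (π (Fin.castLE (Nat.sub_le n 1) i.1))) -
            (fun θ => r θ (π ((i.1 : Fin (n - 1)).succ.castLE (Nat.sub_add_cancel (by omega : 1 ≤ n)).le)))))
    {ξ : Fin d → ℝ} (hξ0 : ∀ θ, 0 ≤ ξ θ) (hξ1 : ∑ θ, ξ θ = 1) :
    (MsetF d n (patt d n r ξ)).card ≤ 2 * d - 1 := by
  classical
  set w := wgt d n r ξ with hw
  set π := Tuple.sort w with hπ
  have mono : ∀ {x y : Fin n}, x ≤ y → w (π x) ≤ w (π y) := fun h => Tuple.monotone_sort w h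
  set E : Finset (Fin (n-1)) := Finset.univ.filter (fun i : Fin (n-1) =>
      w (π (Fin.castLE (Nat.sub_le n 1) i)) = w (π (i.succ.castLE (by omega : n - 1 + 1 ≤ n)))) with hE
  have hEcard : E.card ≤ d - 1 := by
    by_contra hcon
    push_neg at hcon
    obtain ⟨S, hSE, hScard⟩ := Finset.exists_subset_card_eq (show d ≤ E.card by omega)
    have hLI := hnondeg π S hScard
    set φ := cfun d ξ with hφ
    have hφ1 : φ (fun _ => (1:ℝ)) = 1 := by
      rw [hφ, cfun_apply]
      simpa using hξ1
    have hφw : ∀ x : Fin n, φ (fun θ => r θ x) = w x := by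
      intro x
      rw [hφ, cfun_apply, hw]
      rfl
    have hker : ∀ i : S, ((fun θ => r θ (π (Fin.castLE (Nat.sub_le n 1) i.1))) -
          (fun θ => r θ ((i.1 : Fin (n - 1)).succ.castLE (by omega : n - 1 + 1 ≤ n) |> π))) ∈ LinearMap.ker φ := by
      intro i
      rw [LinearMap.mem_ker, map_sub, hφw, hφw]
      have hmem := Finset.mem_filter.1 (hE ▸ hSE i.2)
      rw [sub_eq_zero]
      exact hmem.2
    set v : S → LinearMap.ker φ := fun i => ⟨_, hker i⟩ with hv
    have hLIv : LinearIndependent ℝ v := by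
      apply LinearIndependent.of_comp (LinearMap.ker φ).subtype
      exact hLI
    have hcard := hLIv.fintype_card_le_finrank
    rw [Fintype.card_coe, hScard, finrank_ker_eq d φ (fun _ => (1:ℝ)) hφ1] at hcard
    omega
  set Tied : Finset (Fin n) := Finset.univ.filter (fun a => ∃ b, b ≠ a ∧ w a = w b) with hT
  have hTsub : Tied ⊆ E.biUnion (fun i => {π (Fin.castLE (Nat.sub_le n 1) i),
      π (i.succ.castLE (by omega : n - 1 + 1 ≤ n))}) := by
    intro a haT
    rw [hT, Finset.mem_filter] at haT
    obtain ⟨-, b, hba, hwab⟩ := haT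
    set p := π.symm a with hp
    set q := π.symm b with hq
    have hpa : π p = a := π.apply_symm_apply a
    have hqb : π q = b := π.apply_symm_apply b
    have hpq : q ≠ p := fun h => hba (by rw [← hqb, h, hpa])
    have hpn : (p : ℕ) < n := p.isLt
    have hqn : (q : ℕ) < n := q.isLt
    rcases lt_or_gt_of_ne hpq with hlt | hgt
    · -- q < p : use position p-1, a is the "second" element
      have hql : (q : ℕ) < (p : ℕ) := hlt
      set i : Fin (n-1) := ⟨(p:ℕ) - 1, by omega⟩ with hi
      have hsucc : (i.succ.castLE (by omega : n - 1 + 1 ≤ n)) = p := by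
        apply Fin.ext
        show (p:ℕ) - 1 + 1 = (p:ℕ)
        omega
      have h1 : w (π (Fin.castLE (Nat.sub_le n 1) i)) ≤ w (π p) :=
        mono (by rw [Fin.le_def]; show (p:ℕ) - 1 ≤ (p:ℕ); omega)
      have h2 : w (π p) ≤ w (π (Fin.castLE (Nat.sub_le n 1) i)) := by
        calc w (π p) = w (π q) := by rw [hpa, hqb]; exact hwab
          _ ≤ w (π (Fin.castLE (Nat.sub_le n 1) i)) :=
            mono (by rw [Fin.le_def]; show (q:ℕ) ≤ (p:ℕ) - 1; omega)
      have hiE : i ∈ E := by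
        rw [hE, Finset.mem_filter]
        exact ⟨Finset.mem_univ _, by rw [hsucc]; exact le_antisymm h1 h2⟩
      refine Finset.mem_biUnion.2 ⟨i, hiE, ?_⟩
      rw [Finset.mem_insert, Finset.mem_singleton]
      right
      rw [hsucc, hpa]
    · -- p < q : use position p, a is the "first" element
      have hql : (p : ℕ) < (q : ℕ) := hgt
      set i : Fin (n-1) := ⟨(p:ℕ), by omega⟩ with hi
      have hcast : Fin.castLE (Nat.sub_le n 1) i = p := Fin.ext rfl
      have h1 : w (π p) ≤ w (π (i.succ.castLE (by omega : n - 1 + 1 ≤ n))) :=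
        mono (by rw [Fin.le_def]; show (p:ℕ) ≤ (p:ℕ) + 1; omega)
      have h2 : w (π (i.succ.castLE (by omega : n - 1 + 1 ≤ n))) ≤ w (π p) := by
        calc w (π (i.succ.castLE (by omega : n - 1 + 1 ≤ n))) ≤ w (π q) :=
              mono (by rw [Fin.le_def]; show (p:ℕ) + 1 ≤ (q:ℕ); omega)
          _ = w (π p) := by rw [hpa, hqb]; exact hwab.symm
      have hiE : i ∈ E := by
        rw [hE, Finset.mem_filter]
        exact ⟨Finset.mem_univ _, by rw [hcast]; exact le_antisymm h1 h2⟩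
      refine Finset.mem_biUnion.2 ⟨i, hiE, ?_⟩
      rw [Finset.mem_insert, Finset.mem_singleton]
      left
      rw [hcast, hpa]
  have hTcard : Tied.card ≤ 2 * E.card := by
    have h1 : Tied.card ≤ (E.biUnion fun i => ({π (Fin.castLE (Nat.sub_le n 1) i),
        π (i.succ.castLE (by omega : n - 1 + 1 ≤ n))} : Finset (Fin n))).card :=
      Finset.card_le_card hTsub
    have h2 : (E.biUnion fun i => ({π (Fin.castLE (Nat.sub_le n 1) i),
        π (i.succ.castLE (by omega : n - 1 + 1 ≤ n))} : Finset (Fin n))).card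
        ≤ ∑ i ∈ E, ({π (Fin.castLE (Nat.sub_le n 1) i),
        π (i.succ.castLE (by omega : n - 1 + 1 ≤ n))} : Finset (Fin n)).card :=
      Finset.card_biUnion_le
    have h3 : (∑ i ∈ E, ({π (Fin.castLE (Nat.sub_le n 1) i),
        π (i.succ.castLE (by omega : n - 1 + 1 ≤ n))} : Finset (Fin n)).card)
        ≤ ∑ _i ∈ E, 2 :=
      Finset.sum_le_sum (fun i _ => le_trans (Finset.card_insert_le _ _) (by simp))
    have h4 : (∑ _i ∈ E, 2) = 2 * E.card := by rw [Finset.sum_const, smul_eq_mul, mul_comm]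
    omega
  set Zs : Finset (Fin n) := Finset.univ.filter (fun a => w a = 0 ∧ ∀ b, b ≠ a → w a ≠ w b) with hZ
  have hZcard : Zs.card ≤ 1 := by
    rw [Finset.card_le_one]
    intro a ha b hb
    by_contra hne
    rw [hZ, Finset.mem_filter] at ha hb
    exact ha.2.2 b (Ne.symm hne) (by rw [ha.2.1, hb.2.1])
  have hMsub : MsetF d n (patt d n r ξ) ⊆ Tied ∪ Zs := by
    intro a ha
    simp only [MsetF, Finset.mem_filter, Finset.mem_univ, true_and] at ha
    by_cases htied : ∃ b, b ≠ a ∧ w a = w b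
    · refine Finset.mem_union_left _ ?_
      rw [hT, Finset.mem_filter]
      exact ⟨Finset.mem_univ _, htied⟩
    · have hz : w a = 0 := by
        rcases ha with h | ⟨b, hbne, hb0⟩
        · exact sign_eq_zero_iff.mp h
        · exact absurd ⟨b, hbne, sub_eq_zero.mp (sign_eq_zero_iff.mp hb0)⟩ htied
      refine Finset.mem_union_right _ ?_
      rw [hZ, Finset.mem_filter]
      exact ⟨Finset.mem_univ _, hz, fun b hb hwb => htied ⟨b, hb, hwb⟩⟩
  calc (MsetF d n (patt d n r ξ)).card ≤ (Tied ∪ Zs).card := Finset.card_le_card hMsub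
    _ ≤ Tied.card + Zs.card := Finset.card_union_le _ _
    _ ≤ 2 * d - 1 := by omega

/-- The number of realized sign patterns over the simplex is small. -/
lemma patt_ncard_le (d n : ℕ) (hd : 1 ≤ d) (r : Fin d → Fin n → ℝ) :
    {σ : PatIdx n → SignType | ∃ ξ ∈ stdSimplex ℝ (Fin d), patt d n r ξ = σ}.ncard
      ≤ Bnd (d-1) (n*n + n) := by
  classical
  set x0 : Fin d → ℝ := fun _ => (1:ℝ)/d with hx0
  set φs := cfun d (fun _ => (1:ℝ)) with hφs
  have hφs_apply : ∀ u : Fin d → ℝ, φs u = ∑ θ, u θ := by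
    intro u
    rw [hφs, cfun_apply]
    simp
  have hφsx0 : φs x0 = 1 := by
    rw [hφs_apply]
    simp [hx0]
    exact mul_inv_cancel₀ (Nat.cast_ne_zero.2 (by omega))
  set W := LinearMap.ker φs with hW
  have hWrank : finrank ℝ W ≤ d - 1 := le_of_eq (finrank_ker_eq d φs x0 hφsx0)
  set incl : W →ᵃ[ℝ] (Fin d → ℝ) :=
    ⟨fun v => x0 + (v : Fin d → ℝ), W.subtype, by
      intro p v
      simp only [vadd_eq_add, Submodule.coe_subtype, Submodule.coe_add]
      abel⟩ with hincl
  set cf : PatIdx n → (Fin d → ℝ) := fun j =>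
    Sum.casesOn j (fun pq => fun θ => r θ pq.1 - r θ pq.2) (fun a => fun θ => r θ a) with hcf
  set F : PatIdx n → (W →ᵃ[ℝ] ℝ) := fun j => ((cfun d (cf j)).toAffineMap).comp incl with hF
  have key : ∀ (j : PatIdx n) (ξ : Fin d → ℝ), cfun d (cf j) ξ =
      Sum.casesOn j (fun pq => wgt d n r ξ pq.1 - wgt d n r ξ pq.2) (fun a => wgt d n r ξ a) := by
    intro j ξ
    cases j with
    | inl pq =>
      rw [cfun_apply]
      show _ = wgt d n r ξ pq.1 - wgt d n r ξ pq.2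
      rw [wgt, wgt, ← Finset.sum_sub_distrib]
      exact Finset.sum_congr rfl fun θ _ => by simp [hcf]; ring
    | inr a =>
      rw [cfun_apply]
      show _ = wgt d n r ξ a
      rw [wgt]
      exact Finset.sum_congr rfl fun θ _ => by simp [hcf]; ring
  set C' : Set W := incl ⁻¹' (stdSimplex ℝ (Fin d)) with hC'
  have hC'conv : Convex ℝ C' := (convex_stdSimplex ℝ (Fin d)).affine_preimage incl
  have hseteq : {σ : PatIdx n → SignType | ∃ ξ ∈ stdSimplex ℝ (Fin d), patt d n r ξ = σ}
      = {σ : PatIdx n → SignType | ∃ v ∈ C', ∀ j, σ j = SignType.sign (F j v)} := by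
    ext σ
    constructor
    · rintro ⟨ξ, hξ, rfl⟩
      have hmem : ξ - x0 ∈ W := by
        rw [hW, LinearMap.mem_ker, map_sub, hφs_apply, hφs_apply]
        have h1 : ∑ θ, ξ θ = 1 := hξ.2
        have h2 : ∑ θ, x0 θ = 1 := by rw [← hφs_apply]; exact hφsx0
        rw [h1, h2, sub_self]
      have hval : incl ⟨ξ - x0, hmem⟩ = ξ := by
        show x0 + (ξ - x0) = ξ
        abel
      refine ⟨⟨ξ - x0, hmem⟩, ?_, fun j => ?_⟩
      · show incl _ ∈ stdSimplex ℝ (Fin d)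
        rw [hval]
        exact hξ
      · show patt d n r ξ j = SignType.sign ((cfun d (cf j)) (incl ⟨ξ - x0, hmem⟩))
        rw [hval, key]
        cases j with
        | inl pq => rfl
        | inr a => rfl
    · rintro ⟨v, hvC, hσ⟩
      refine ⟨x0 + (v : Fin d → ℝ), hvC, ?_⟩
      funext j
      rw [hσ j]
      show patt d n r (x0 + (v : Fin d → ℝ)) j = SignType.sign ((cfun d (cf j)) (incl v))
      have hiv : incl v = x0 + (v : Fin d → ℝ) := rfl
      rw [hiv, key]
      cases j with
      | inl pq => rfl
      | inr a => rfl
  rw [hseteq]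
  have hfin := signPattern_ncard_le' (d-1) W hWrank (PatIdx n) F C' hC'conv
  have hcard : Fintype.card (PatIdx n) = n*n + n := by
    simp [Fintype.card_sum, Fintype.card_prod]
  rwa [hcard] at hfin

theorem stmt_9 (d : ℕ) (hd : 1 ≤ d) :
    ∃ C : ℕ, ∀ (n : ℕ) (hn : 2 ≤ n) (M : GreedyMatroid (Fin n))
      (r : Fin d → Fin n → ℝ) (hr : ∀ θ i, 0 ≤ r θ i)
      (hnondeg : ∀ (π : Equiv.Perm (Fin n)) (S : Finset (Fin (n - 1))), S.card = d →
        LinearIndependent ℝ (fun i : S =>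
          (fun θ => r θ (π (Fin.castLE (Nat.sub_le n 1) i.1))) -
            (fun θ => r θ (π ((i.1 : Fin (n - 1)).succ.castLE (by omega)))))),
      Nat.card {S : Finset (Fin n) | M.Indep S ∧
          ∃ ξ : Fin d → ℝ, (∀ θ, 0 ≤ ξ θ) ∧ ∑ θ, ξ θ = 1 ∧
            ∀ T : Finset (Fin n), M.Indep T →
              ∑ i ∈ T, ∑ θ, ξ θ * r θ i ≤ ∑ i ∈ S, ∑ θ, ξ θ * r θ i} ≤
        C * n ^ (2 * (d - 1)) := by
  classical
  refine ⟨2 ^ (4 * d), ?_⟩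
  intro n hn M r hr hnondeg
  rw [Nat.card_coe_set_eq]
  set A : Set (Finset (Fin n)) := {S : Finset (Fin n) | M.Indep S ∧
      ∃ ξ : Fin d → ℝ, (∀ θ, 0 ≤ ξ θ) ∧ ∑ θ, ξ θ = 1 ∧
        ∀ T : Finset (Fin n), M.Indep T →
          ∑ i ∈ T, ∑ θ, ξ θ * r θ i ≤ ∑ i ∈ S, ∑ θ, ξ θ * r θ i} with hA
  set P : Set (PatIdx n → SignType) :=
    {σ | ∃ ξ ∈ stdSimplex ℝ (Fin d), patt d n r ξ = σ} with hP
  have hPfin : P.Finite := Set.toFinite _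
  -- witness selection
  set wit : Finset (Fin n) → (Fin d → ℝ) := fun S =>
    if h : ∃ ξ : Fin d → ℝ, (∀ θ, 0 ≤ ξ θ) ∧ ∑ θ, ξ θ = 1 ∧
        ∀ T : Finset (Fin n), M.Indep T →
          ∑ i ∈ T, ∑ θ, ξ θ * r θ i ≤ ∑ i ∈ S, ∑ θ, ξ θ * r θ i
    then Classical.choose h else (fun _ => 0) with hwitdef
  have hwit : ∀ S ∈ A, (∀ θ, 0 ≤ wit S θ) ∧ (∑ θ, wit S θ = 1) ∧
      (∀ T, M.Indep T → ∑ i ∈ T, ∑ θ, wit S θ * r θ i ≤ ∑ i ∈ S, ∑ θ, wit S θ * r θ i) := by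
    intro S hS
    obtain ⟨-, hEx⟩ := hS
    rw [hwitdef]
    simp only [dif_pos hEx]
    exact Classical.choose_spec hEx
  set G : Finset (Fin n) → ((PatIdx n → SignType) × Finset (Fin n)) := fun S =>
    (patt d n r (wit S), S ∩ MsetF d n (patt d n r (wit S))) with hGdef
  -- injectivity of the encoding on A
  have hinj : Set.InjOn G A := by
    intro S hS S' hS' hGeq
    have hSind : M.Indep S := hS.1
    have hS'ind : M.Indep S' := hS'.1
    have hw := hwit S hS
    have hw' := hwit S' hS'
    have hpq : patt d n r (wit S) = patt d n r (wit S') := congrArg Prod.fst hGeq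
    have hIq : S ∩ MsetF d n (patt d n r (wit S)) = S' ∩ MsetF d n (patt d n r (wit S)) := by
      have h2 := congrArg Prod.snd hGeq
      simp only [hGdef] at h2
      rw [← hpq] at h2
      exact h2
    ext a
    by_cases haM : a ∈ MsetF d n (patt d n r (wit S))
    · constructor
      · intro haS
        have : a ∈ S' ∩ MsetF d n (patt d n r (wit S)) := by
          rw [← hIq]
          exact Finset.mem_inter.2 ⟨haS, haM⟩
        exact (Finset.mem_inter.1 this).1
      · intro haS'
        have : a ∈ S ∩ MsetF d n (patt d n r (wit S)) := by
          rw [hIq]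
          exact Finset.mem_inter.2 ⟨haS', haM⟩
        exact (Finset.mem_inter.1 this).1
    · have h1 := mem_iff_rk d n r hr M hw.1 hSind hw.2.2 haM
      have haM' : a ∉ MsetF d n (patt d n r (wit S')) := by rw [← hpq]; exact haM
      have h2 := mem_iff_rk d n r hr M hw'.1 hS'ind hw'.2.2 haM'
      rw [h1, h2, hpq]
  -- the target finset
  set Pfin := hPfin.toFinset with hPfin'
  set Bfin : Finset ((PatIdx n → SignType) × Finset (Fin n)) :=
    Pfin.biUnion (fun p => ((MsetF d n p).powerset).image (fun T => (p, T))) with hBfin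
  have hmaps : ∀ S ∈ A, G S ∈ Bfin := by
    intro S hS
    refine Finset.mem_biUnion.2 ⟨patt d n r (wit S), ?_, ?_⟩
    · rw [hPfin', Set.Finite.mem_toFinset]
      exact ⟨wit S, ⟨(hwit S hS).1, (hwit S hS).2.1⟩, rfl⟩
    · exact Finset.mem_image.2 ⟨S ∩ MsetF d n (patt d n r (wit S)),
        Finset.mem_powerset.2 Finset.inter_subset_right, rfl⟩
  have hAcard : A.ncard ≤ Bfin.card := by
    calc A.ncard = (G '' A).ncard := (Set.ncard_image_of_injOn hinj).symm
      _ ≤ (↑Bfin : Set _).ncard := Set.ncard_le_ncard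
          (by rintro _ ⟨S, hS, rfl⟩; exact hmaps S hS) Bfin.finite_toSet
      _ = Bfin.card := Set.ncard_coe_finset _
  have hBcard : Bfin.card ≤ Bnd (d-1) (n*n+n) * 2^(2*d-1) := by
    refine le_trans Finset.card_biUnion_le ?_
    have hper : ∀ p ∈ Pfin, (((MsetF d n p).powerset).image (fun T => (p, T))).card
        ≤ 2^(2*d-1) := by
      intro p hp
      rw [hPfin', Set.Finite.mem_toFinset] at hp
      obtain ⟨ξ, hξ, rfl⟩ := hp
      refine le_trans Finset.card_image_le ?_
      rw [Finset.card_powerset]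
      exact Nat.pow_le_pow_right (by norm_num)
        (Mset_card_le d n hd hn r hnondeg hξ.1 hξ.2)
    calc ∑ p ∈ Pfin, (((MsetF d n p).powerset).image (fun T => (p, T))).card
        ≤ ∑ _p ∈ Pfin, 2^(2*d-1) := Finset.sum_le_sum hper
      _ = Pfin.card * 2^(2*d-1) := by rw [Finset.sum_const, smul_eq_mul]
      _ ≤ Bnd (d-1) (n*n+n) * 2^(2*d-1) := by
          have hPc : Pfin.card = P.ncard := by
            rw [hPfin', Set.ncard_eq_toFinset_card P hPfin]
          have hPn := patt_ncard_le d n hd r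
          rw [← hP] at hPn
          exact Nat.mul_le_mul_right _ (by omega)
  have harith : Bnd (d-1) (n*n+n) * 2^(2*d-1) ≤ 2^(4*d) * n^(2*(d-1)) := by
    have h1 := Bnd_le (d-1) (n*n+n)
    have h2 : 2*(n*n+n)+2 ≤ 4*(n*n) := by nlinarith
    have h3 : Bnd (d-1) (n*n+n) ≤ (4*(n*n))^(d-1) :=
      h1.trans (Nat.pow_le_pow_left h2 _)
    have h4 : (4*(n*n))^(d-1) = 4^(d-1) * n^(2*(d-1)) := by
      rw [show n*n = n^2 by ring, mul_pow, ← pow_mul]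
    have h5 : 4^(d-1) * 2^(2*d-1) ≤ 2^(4*d) := by
      have : (4:ℕ)^(d-1) = 2^(2*(d-1)) := by
        rw [show (4:ℕ) = 2^2 by norm_num, ← pow_mul]
      rw [this, ← pow_add]
      exact Nat.pow_le_pow_right (by norm_num) (by omega)
    calc Bnd (d-1) (n*n+n) * 2^(2*d-1) ≤ (4*(n*n))^(d-1) * 2^(2*d-1) :=
          Nat.mul_le_mul_right _ h3
      _ = (4^(d-1) * 2^(2*d-1)) * n^(2*(d-1)) := by rw [h4]; ring
      _ ≤ 2^(4*d) * n^(2*(d-1)) := Nat.mul_le_mul_right _ h5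
  exact hAcard.trans (hBcard.trans harith)
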